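/- For every m ≥ 1 and every central arrangement 𝒜 in ℂⁿ with defining polynomial p = p₁⋯p_r, the modified Euler operator ε_m belongs to D^(m)(𝒜); that is, ε_m(f) ∈ ⟨p⟩ for every f ∈ ⟨p⟩. -/

import Mathlib

open MvPolynomial

noncomputable section

/-- The polynomial ring `S = ℂ[x₁,…,xₙ]`. -/
abbrev S (n : ℕ) : Type := MvPolynomial (Fin n) ℂ

/-- The finite set of exponent vectors `α ∈ ℕⁿ` with `|α| = m`. -/
def degIdx (n m : ℕ) : Finset (Fin n → ℕ) :=
  (Fintype.piFinset fun _ : Fin n => Finset.range (m + 1)).filter fun α => ∑ i, α i = m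

/-- The differential operator `∂^α`, the composition of the partial derivatives
`∂/∂xᵢ` applied `αᵢ` times. -/
def pd {n : ℕ} (α : Fin n → ℕ) : Module.End ℂ (S n) :=
  (List.ofFn fun i : Fin n => ((pderiv (R := ℂ) i).toLinearMap) ^ (α i)).prod

/-- The action of an order-`m` differential operator with polynomial coefficients
`c = (c_α)_{|α| = m}` on a polynomial: `c(f) = Σ_{|α|=m} c_α ∂^α f`. -/
def applyOp {n m : ℕ} (c : degIdx n m → S n) (f : S n) : S n :=
  ∑ α : degIdx n m, c α * pd (α : Fin n → ℕ) f

lemma applyOp_add {n m : ℕ} (a b : degIdx n m → S n) (f : S n) :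
    applyOp (a + b) f = applyOp a f + applyOp b f := by
  simp [applyOp, add_mul, Finset.sum_add_distrib]

lemma applyOp_smul {n m : ℕ} (s : S n) (a : degIdx n m → S n) (f : S n) :
    applyOp (s • a) f = s * applyOp a f := by
  simp [applyOp, Finset.mul_sum, mul_assoc]

lemma applyOp_zero {n m : ℕ} (f : S n) : applyOp (0 : degIdx n m → S n) f = 0 := by
  simp [applyOp]

/-- `D^(m)(p)`: the `S`-module of order-`m` differential operators with polynomial
coefficients preserving the principal ideal `⟨p⟩`. -/
def Dm {n : ℕ} (m : ℕ) (p : S n) : Submodule (S n) (degIdx n m → S n) where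
  carrier := {c | ∀ f ∈ Ideal.span {p}, applyOp c f ∈ Ideal.span {p}}
  add_mem' := by
    intro a b ha hb f hf
    rw [applyOp_add]
    exact Ideal.add_mem _ (ha f hf) (hb f hf)
  zero_mem' := by
    intro f hf
    rw [applyOp_zero]
    exact Ideal.zero_mem _
  smul_mem' := by
    intro s c hc f hf
    rw [applyOp_smul]
    exact Ideal.mul_mem_left _ _ (hc f hf)

/-- A nonzero linear form. -/
def IsLinearForm {n : ℕ} (q : S n) : Prop := q ≠ 0 ∧ q.IsHomogeneous 1

/-- The linear forms of an arrangement are pairwise non-proportional. -/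
def PairwiseNonProportional {n r : ℕ} (p : Fin r → S n) : Prop :=
  ∀ i j : Fin r, i ≠ j → ∀ a : ℂ, p i ≠ a • p j

end

/-- The modified Euler operator `ε_m`, with coefficient family
`(ε_m)_α = (m!/α!)·x^α` where `m!/α!` is the multinomial coefficient. -/
noncomputable def eulerOp (n m : ℕ) : degIdx n m → S n :=
  fun α => (Nat.multinomial Finset.univ (α : Fin n → ℕ) : S n) *
    ∏ i, X i ^ ((α : Fin n → ℕ) i)


section Aux

open Finset

lemma mem_degIdx {n m : ℕ} {α : Fin n → ℕ} : α ∈ degIdx n m ↔ ∑ i, α i = m := by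
  simp only [degIdx, Finset.mem_filter, Fintype.mem_piFinset, Finset.mem_range]
  refine ⟨fun h => h.2, fun h => ⟨fun i => ?_, h⟩⟩
  have := Finset.single_le_sum (f := α) (fun j _ => Nat.zero_le _) (Finset.mem_univ i)
  omega

lemma vander_choose : ∀ (n m : ℕ) (β : Fin n → ℕ),
    ∑ α ∈ degIdx n m, ∏ i, (β i).choose (α i) = (∑ i, β i).choose m := by
  intro n
  induction n with
  | zero =>
    intro m β
    rcases m with _ | m
    · have h : degIdx 0 0 = {finZeroElim} := by
        ext α
        simp only [mem_degIdx, Finset.mem_singleton, Finset.sum_empty, Finset.univ_eq_empty]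
        exact ⟨fun _ => Subsingleton.elim _ _, fun _ => trivial⟩
      simp [h]
    · have h : degIdx 0 (m + 1) = ∅ := by
        ext α
        simp [mem_degIdx]
      simp [h]
  | succ n ih =>
    intro m β
    rw [Fin.sum_univ_succ, Nat.add_choose_eq]
    have : ∀ jk ∈ Finset.HasAntidiagonal.antidiagonal m,
        (β 0).choose jk.1 * (∑ i : Fin n, β i.succ).choose jk.2
        = ∑ α' ∈ degIdx n jk.2, (β 0).choose jk.1 * ∏ i, (β i.succ).choose (α' i) := by
      intro jk _
      rw [← ih jk.2 (fun i => β i.succ), Finset.mul_sum]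
    rw [Finset.sum_congr rfl this]
    rw [← Finset.sum_sigma (Finset.HasAntidiagonal.antidiagonal m) (fun jk => degIdx n jk.2)
      (fun x => (β 0).choose x.1.1 * ∏ i : Fin n, (β i.succ).choose (x.2 i))]
    refine Finset.sum_nbij'
      (fun α : Fin (n + 1) → ℕ =>
        (⟨(α 0, ∑ i : Fin n, α i.succ), fun i => α i.succ⟩ : Σ _ : ℕ × ℕ, (Fin n → ℕ)))
      (fun x : Σ _ : ℕ × ℕ, (Fin n → ℕ) => Fin.cons x.1.1 x.2) ?_ ?_ ?_ ?_ ?_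
    · intro α hα
      rw [mem_degIdx, Fin.sum_univ_succ] at hα
      exact Finset.mem_sigma.mpr ⟨Finset.HasAntidiagonal.mem_antidiagonal.mpr hα, mem_degIdx.mpr rfl⟩
    · intro x hx
      obtain ⟨⟨j, k⟩, α'⟩ := x
      obtain ⟨h1, h2⟩ := Finset.mem_sigma.mp hx
      rw [mem_degIdx]
      simp only [Fin.sum_univ_succ, Fin.cons_zero, Fin.cons_succ]
      rw [mem_degIdx.mp h2]
      exact Finset.HasAntidiagonal.mem_antidiagonal.mp h1
    · intro α _
      exact (Fin.cons_self_tail α)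
    · intro x hx
      obtain ⟨⟨j, k⟩, α'⟩ := x
      obtain ⟨_, h2⟩ := Finset.mem_sigma.mp hx
      have hk : ∑ i, α' i = k := mem_degIdx.mp h2
      subst hk
      simp [Fin.cons_zero, Fin.cons_succ]
    · intro α _
      rw [Fin.prod_univ_succ]

lemma vander_desc (n m : ℕ) (β : Fin n → ℕ) :
    ∑ α ∈ degIdx n m, Nat.multinomial Finset.univ α * ∏ i, (β i).descFactorial (α i)
      = (∑ i, β i).descFactorial m := by
  rw [Nat.descFactorial_eq_factorial_mul_choose, ← vander_choose n m β, Finset.mul_sum]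
  refine Finset.sum_congr rfl fun α hα => ?_
  have hm : ∑ i, α i = m := mem_degIdx.mp hα
  calc Nat.multinomial Finset.univ α * ∏ i, (β i).descFactorial (α i)
      = Nat.multinomial Finset.univ α * ∏ i, (Nat.factorial (α i) * (β i).choose (α i)) := by
        simp_rw [Nat.descFactorial_eq_factorial_mul_choose]
    _ = ((∏ i, Nat.factorial (α i)) * Nat.multinomial Finset.univ α) * ∏ i, (β i).choose (α i) := by
        rw [Finset.prod_mul_distrib]; ring
    _ = Nat.factorial (∑ i, α i) * ∏ i, (β i).choose (α i) := by rw [Nat.multinomial_spec]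
    _ = Nat.factorial m * ∏ i, (β i).choose (α i) := by rw [hm]

lemma pderiv_pow_monomial {n : ℕ} (i : Fin n) (k : ℕ) (s : Fin n →₀ ℕ) (c : ℂ) :
    (((pderiv (R := ℂ) i).toLinearMap) ^ k) (monomial s c) =
      monomial (s - Finsupp.single i k) (((s i).descFactorial k : ℂ) * c) := by
  induction k with
  | zero => simp
  | succ k ih =>
    rw [pow_succ', Module.End.mul_apply, ih]
    simp only [Derivation.coeFn_coe, LinearMap.coe_coe, pderiv_monomial]
    have he : s - Finsupp.single i k - Finsupp.single i 1 = s - Finsupp.single i (k + 1) := by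
      rw [tsub_tsub, ← Finsupp.single_add]
    rw [he]
    congr 1
    have hs : (s - Finsupp.single i k) i = s i - k := by
      simp [Finsupp.tsub_apply]
    rw [hs, Nat.descFactorial_succ]
    push_cast
    ring

lemma list_pd_monomial {n : ℕ} (α : Fin n → ℕ) (L : List (Fin n)) (hL : L.Nodup)
    (s : Fin n →₀ ℕ) (c : ℂ) :
    ((L.map fun i => ((pderiv (R := ℂ) i).toLinearMap) ^ (α i)).prod) (monomial s c) =
      monomial (s - (L.map fun i => Finsupp.single i (α i)).sum)
        (((L.map fun i => (s i).descFactorial (α i)).prod : ℕ) * c) := by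
  induction L with
  | nil => simp
  | cons i L ih =>
    have hnd := List.nodup_cons.mp hL
    simp only [List.map_cons, List.prod_cons, Module.End.mul_apply, List.sum_cons]
    rw [ih hnd.2, pderiv_pow_monomial]
    have hzero : ((L.map fun j => Finsupp.single j (α j)).sum) i = 0 := by
      rw [← Finsupp.applyAddHom_apply, map_list_sum]
      simp only [List.map_map]
      apply List.sum_eq_zero
      intro x hx
      simp only [List.mem_map, Function.comp] at hx
      obtain ⟨j, hj, rfl⟩ := hx
      simp only [Finsupp.applyAddHom_apply]
      exact Finsupp.single_eq_of_ne (fun h => hnd.1 (h ▸ hj))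
    have hsi : (s - (L.map fun j => Finsupp.single j (α j)).sum) i = s i := by
      rw [Finsupp.tsub_apply, hzero, Nat.sub_zero]
    rw [hsi]
    have he : s - (L.map fun j => Finsupp.single j (α j)).sum - Finsupp.single i (α i)
        = s - (Finsupp.single i (α i) + (L.map fun j => Finsupp.single j (α j)).sum) := by
      rw [tsub_tsub, add_comm]
    rw [he]
    congr 1
    push_cast
    ring

lemma pd_monomial {n : ℕ} (α : Fin n → ℕ) (s : Fin n →₀ ℕ) (c : ℂ) :
    pd α (monomial s c) =
      monomial (s - ∑ i, Finsupp.single i (α i))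
        ((∏ i, ((s i).descFactorial (α i)) : ℕ) * c) := by
  have h1 : (List.ofFn fun i : Fin n => ((pderiv (R := ℂ) i).toLinearMap) ^ (α i))
      = (List.finRange n).map fun i => ((pderiv (R := ℂ) i).toLinearMap) ^ (α i) := by
    rw [List.ofFn_eq_map]
  rw [pd, h1, list_pd_monomial α _ (List.nodup_finRange n), Fin.sum_univ_def, Fin.prod_univ_def]

lemma prod_X_pow {n : ℕ} (α : Fin n → ℕ) :
    (∏ i, (X i : S n) ^ α i) = monomial (∑ i, Finsupp.single i (α i)) 1 := by
  simp only [X_pow_eq_monomial]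
  have : ∀ (t : Finset (Fin n)),
      (∏ i ∈ t, (monomial (Finsupp.single i (α i)) (1 : ℂ) : S n))
        = monomial (∑ i ∈ t, Finsupp.single i (α i)) 1 := by
    intro t
    induction t using Finset.induction with
    | empty => simp
    | insert _ _ hni ih =>
      rw [Finset.prod_insert hni, Finset.sum_insert hni, ih, monomial_mul, one_mul]
  exact this Finset.univ

lemma sum_single_apply {n : ℕ} (α : Fin n → ℕ) (i : Fin n) :
    (∑ j, Finsupp.single j (α j)) i = α i := by
  rw [← Finsupp.applyAddHom_apply, map_sum]
  simp only [Finsupp.applyAddHom_apply, Finsupp.single_apply]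
  rw [Finset.sum_ite_eq' Finset.univ i α]
  simp

lemma euler_term {n : ℕ} (α : Fin n → ℕ) (s : Fin n →₀ ℕ) (c : ℂ) :
    ((Nat.multinomial Finset.univ α : S n) * ∏ i, X i ^ α i) * pd α (monomial s c)
      = monomial s
          (((Nat.multinomial Finset.univ α * ∏ i, (s i).descFactorial (α i) : ℕ) : ℂ) * c) := by
  rw [pd_monomial, prod_X_pow]
  by_cases hle : ∀ i, α i ≤ s i
  · have hA : (∑ i, Finsupp.single i (α i)) ≤ s := by
      rw [Finsupp.le_def]
      intro i
      rw [sum_single_apply]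
      exact hle i
    rw [mul_assoc, monomial_mul, add_tsub_cancel_of_le hA, one_mul]
    have hcast : ((Nat.multinomial Finset.univ α : ℕ) : S n)
        = C ((Nat.multinomial Finset.univ α : ℕ) : ℂ) := by
      simp
    rw [hcast, C_mul_monomial]
    congr 1
    push_cast
    ring
  · push_neg at hle
    obtain ⟨i, hi⟩ := hle
    have hz : (∏ i, (s i).descFactorial (α i)) = 0 :=
      Finset.prod_eq_zero (Finset.mem_univ i) (Nat.descFactorial_eq_zero_iff_lt.mpr hi)
    simp [hz]

lemma applyOp_euler_monomial {n : ℕ} (m : ℕ) (s : Fin n →₀ ℕ) (c : ℂ) :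
    applyOp (eulerOp n m) (monomial s c)
      = monomial s ((((∑ i, s i).descFactorial m : ℕ) : ℂ) * c) := by
  rw [applyOp]
  simp only [eulerOp]
  rw [Finset.sum_coe_sort (degIdx n m)
    (fun α => ((Nat.multinomial Finset.univ α : S n) * ∏ i, X i ^ α i) * pd α (monomial s c))]
  rw [Finset.sum_congr rfl (fun α _ => euler_term α s c), ← map_sum]
  congr 1
  rw [← Finset.sum_mul]
  congr 1
  rw [← Nat.cast_sum, vander_desc n m (fun i => s i)]

lemma applyOp_sum {n m : ℕ} (c : degIdx n m → S n) {ι : Type*} (t : Finset ι) (f : ι → S n) :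
    applyOp c (∑ x ∈ t, f x) = ∑ x ∈ t, applyOp c (f x) := by
  simp only [applyOp, map_sum, Finset.mul_sum]
  exact Finset.sum_comm

lemma finsupp_degree_eq {n : ℕ} (s : Fin n →₀ ℕ) : s.degree = ∑ i, s i :=
  Finset.sum_subset (Finset.subset_univ _) (fun i _ hi => Finsupp.notMem_support_iff.mp hi)

lemma applyOp_euler_homog {n m d : ℕ} {h : S n} (hh : h.IsHomogeneous d) :
    applyOp (eulerOp n m) h = C ((d.descFactorial m : ℕ) : ℂ) * h := by
  conv_lhs => rw [h.as_sum]
  conv_rhs => rw [h.as_sum]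
  rw [applyOp_sum, Finset.mul_sum]
  refine Finset.sum_congr rfl fun s hs => ?_
  have hdeg : ∑ i, s i = d := by
    rw [← finsupp_degree_eq, Finsupp.degree_eq_weight_one]
    exact hh (mem_support_iff.mp hs)
  rw [applyOp_euler_monomial, hdeg, C_mul_monomial]

end Aux

/-- For every `m ≥ 1` and every central arrangement with defining
polynomial `p = p₁⋯p_r`, the modified Euler operator `ε_m` belongs to `D^(m)(𝒜)`;
i.e. `ε_m(f) ∈ ⟨p⟩` for every `f ∈ ⟨p⟩`. -/
theorem eulerOp_mem_Dm {n r m : ℕ} (hm : 1 ≤ m) (p : Fin r → S n)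
    (hlin : ∀ i, IsLinearForm (p i)) (hnp : PairwiseNonProportional p) :
    eulerOp n m ∈ Dm m (∏ i, p i) := by
  intro f hf
  have hP : (∏ i, p i).IsHomogeneous r := by
    have := MvPolynomial.IsHomogeneous.prod Finset.univ p (fun _ => 1)
      (fun i _ => (hlin i).2)
    simpa using this
  obtain ⟨g, rfl⟩ := Ideal.mem_span_singleton'.mp hf
  rw [Ideal.mem_span_singleton']
  refine ⟨∑ s ∈ g.support, C ((((∑ i, s i) + r).descFactorial m : ℕ) : ℂ)
    * monomial s (coeff s g), ?_⟩
  have hsplit : applyOp (eulerOp n m) (g * ∏ i, p i)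
      = ∑ s ∈ g.support, applyOp (eulerOp n m) (monomial s (coeff s g) * ∏ i, p i) := by
    conv_lhs => rw [g.as_sum]
    rw [Finset.sum_mul, applyOp_sum]
  rw [hsplit, Finset.sum_mul]
  refine (Finset.sum_congr rfl fun s hs => ?_).symm
  have hhom : (monomial s (coeff s g) * ∏ i, p i).IsHomogeneous ((∑ i, s i) + r) :=
    (isHomogeneous_monomial _ (finsupp_degree_eq s)).mul hP
  rw [applyOp_euler_homog hhom, mul_assoc]
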